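/- Let n ≥ 2 and consider the discrete gradient B = [B_x; B_y] with B_x = (1/(4h))·(G ⊗ H) and B_y = (1/(4h))·(H ⊗ G), h = 1/n. The kernel of B, identified with the space of n × n real matrices P satisfying G P Hᵀ = 0 and H P Gᵀ = 0, is exactly two-dimensional: it is spanned by the all-ones matrix (P_{ij} = 1) and the checkerboard matrix (P_{ij} = (−1)^{i+j}). Consequently the Schur complement Bᵀ A⁻¹ B of the two-dimensional semi-staggered Stokes discretization has exactly 2 zero eigenvalues. -/

import Mathlib

open Matrix
open scoped Kronecker

def Emat (n : ℕ) : Matrix (Fin (n - 1)) (Fin n) ℝ :=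
  Matrix.of fun i j => if (j : ℕ) = (i : ℕ) + 1 then 1 else 0

def Zmat (n : ℕ) : Matrix (Fin (n - 1)) (Fin n) ℝ :=
  Matrix.of fun i j => if (j : ℕ) = (i : ℕ) then 1 else 0

def Gmat (n : ℕ) : Matrix (Fin (n - 1)) (Fin n) ℝ := Emat n - Zmat n

def Hmat (n : ℕ) : Matrix (Fin (n - 1)) (Fin n) ℝ := Emat n + Zmat n

/-- The all-ones `n × n` matrix. -/
def onesM (n : ℕ) : Matrix (Fin n) (Fin n) ℝ := Matrix.of fun _ _ => 1

/-- The `n × n` checkerboard matrix `P_{ij} = (−1)^{i+j}`. -/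
def checkerM (n : ℕ) : Matrix (Fin n) (Fin n) ℝ :=
  Matrix.of fun i j => (-1 : ℝ) ^ ((i : ℕ) + (j : ℕ))

/-! ### Auxiliary lemmas -/

lemma sum_if_eq {N : ℕ} (m : ℕ) (g : Fin N → ℝ) :
    ∑ i : Fin N, (if (i : ℕ) = m then g i else 0) = if hm : m < N then g ⟨m, hm⟩ else 0 := by
  split
  · next hm =>
    have he : ∀ i : Fin N, ((i:ℕ) = m) = (i = ⟨m, hm⟩) := fun i => by simp [Fin.ext_iff]
    simp only [he, Finset.sum_ite_eq', Finset.mem_univ, if_true]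
  · next hm =>
    refine Finset.sum_eq_zero fun i _ => ?_
    rw [if_neg]; omega

lemma sum_if_eq' {N : ℕ} (m : ℕ) (g : Fin N → ℝ) :
    ∑ i : Fin N, (if m = (i : ℕ) then g i else 0) = if hm : m < N then g ⟨m, hm⟩ else 0 := by
  simp only [show ∀ i : Fin N, (m = (i:ℕ)) = ((i:ℕ) = m) from fun i => propext eq_comm]
  exact sum_if_eq m g

lemma sum_if_eq_succ {N : ℕ} (m : ℕ) (g : Fin N → ℝ) :
    ∑ i : Fin N, (if m = (i : ℕ) + 1 then g i else 0) =
      if hm : 1 ≤ m ∧ m - 1 < N then g ⟨m - 1, hm.2⟩ else 0 := by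
  match m with
  | 0 => simp
  | m + 1 =>
    simp only [show ∀ i : Fin N, (m + 1 = (i:ℕ) + 1) = (m = (i:ℕ)) from fun i => propext (by omega),
      sum_if_eq' m g, Nat.add_sub_cancel]
    split
    · next hm => rw [dif_pos ⟨by omega, hm⟩]
    · next hm => rw [dif_neg (by omega)]

lemma Gmul_apply {n : ℕ} (P : Matrix (Fin n) (Fin n) ℝ) (i : Fin (n-1)) (l : Fin n) :
    (Gmat n * P) i l = P ⟨i+1, by have := i.isLt; omega⟩ l - P ⟨i, by have := i.isLt; omega⟩ l := by
  have hi := i.isLt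
  rw [Matrix.mul_apply]
  simp only [Gmat, Emat, Zmat, Matrix.sub_apply, Matrix.of_apply, sub_mul, ite_mul, one_mul,
    zero_mul, Finset.sum_sub_distrib, sum_if_eq]
  rw [dif_pos (by omega : (i:ℕ)+1 < n), dif_pos (by omega : (i:ℕ) < n)]

lemma Hmul_apply {n : ℕ} (P : Matrix (Fin n) (Fin n) ℝ) (i : Fin (n-1)) (l : Fin n) :
    (Hmat n * P) i l = P ⟨i+1, by have := i.isLt; omega⟩ l + P ⟨i, by have := i.isLt; omega⟩ l := by
  have hi := i.isLt
  rw [Matrix.mul_apply]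
  simp only [Hmat, Emat, Zmat, Matrix.add_apply, Matrix.of_apply, add_mul, ite_mul, one_mul,
    zero_mul, Finset.sum_add_distrib, sum_if_eq]
  rw [dif_pos (by omega : (i:ℕ)+1 < n), dif_pos (by omega : (i:ℕ) < n)]

lemma mulHt_apply {n : ℕ} (Q : Matrix (Fin (n-1)) (Fin n) ℝ) (i j : Fin (n-1)) :
    (Q * (Hmat n)ᵀ) i j = Q i ⟨j+1, by have := j.isLt; omega⟩ + Q i ⟨j, by have := j.isLt; omega⟩ := by
  have hj := j.isLt
  rw [Matrix.mul_apply]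
  simp only [Hmat, Emat, Zmat, Matrix.transpose_apply, Matrix.add_apply, Matrix.of_apply,
    mul_add, mul_ite, mul_one, mul_zero, Finset.sum_add_distrib, sum_if_eq]
  rw [dif_pos (by omega : (j:ℕ)+1 < n), dif_pos (by omega : (j:ℕ) < n)]

lemma mulGt_apply {n : ℕ} (Q : Matrix (Fin (n-1)) (Fin n) ℝ) (i j : Fin (n-1)) :
    (Q * (Gmat n)ᵀ) i j = Q i ⟨j+1, by have := j.isLt; omega⟩ - Q i ⟨j, by have := j.isLt; omega⟩ := by
  have hj := j.isLt
  rw [Matrix.mul_apply]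
  simp only [Gmat, Emat, Zmat, Matrix.transpose_apply, Matrix.sub_apply, Matrix.of_apply,
    mul_sub, mul_ite, mul_one, mul_zero, Finset.sum_sub_distrib, sum_if_eq]
  rw [dif_pos (by omega : (j:ℕ)+1 < n), dif_pos (by omega : (j:ℕ) < n)]

lemma GPHt_apply {n : ℕ} (P : Matrix (Fin n) (Fin n) ℝ) (i j : Fin (n-1)) :
    (Gmat n * P * (Hmat n)ᵀ) i j =
      (P ⟨i+1, by have := i.isLt; omega⟩ ⟨j+1, by have := j.isLt; omega⟩
        + P ⟨i+1, by have := i.isLt; omega⟩ ⟨j, by have := j.isLt; omega⟩)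
      - (P ⟨i, by have := i.isLt; omega⟩ ⟨j+1, by have := j.isLt; omega⟩
        + P ⟨i, by have := i.isLt; omega⟩ ⟨j, by have := j.isLt; omega⟩) := by
  rw [mulHt_apply, Gmul_apply, Gmul_apply]; ring

lemma HPGt_apply {n : ℕ} (P : Matrix (Fin n) (Fin n) ℝ) (i j : Fin (n-1)) :
    (Hmat n * P * (Gmat n)ᵀ) i j =
      (P ⟨i+1, by have := i.isLt; omega⟩ ⟨j+1, by have := j.isLt; omega⟩
        - P ⟨i+1, by have := i.isLt; omega⟩ ⟨j, by have := j.isLt; omega⟩)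
      + (P ⟨i, by have := i.isLt; omega⟩ ⟨j+1, by have := j.isLt; omega⟩
        - P ⟨i, by have := i.isLt; omega⟩ ⟨j, by have := j.isLt; omega⟩) := by
  rw [mulGt_apply, Hmul_apply, Hmul_apply]; ring

lemma kernel_char {n : ℕ} (hn : 2 ≤ n) (P : Matrix (Fin n) (Fin n) ℝ)
    (R1 : ∀ i j : ℕ, (hi : i + 1 < n) → (hj : j + 1 < n) →
      P ⟨i+1, hi⟩ ⟨j+1, hj⟩ = P ⟨i, by omega⟩ ⟨j, by omega⟩)
    (R2 : ∀ i j : ℕ, (hi : i + 1 < n) → (hj : j + 1 < n) →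
      P ⟨i+1, hi⟩ ⟨j, by omega⟩ = P ⟨i, by omega⟩ ⟨j+1, hj⟩) :
    ∀ (i j : ℕ) (hi : i < n) (hj : j < n), P ⟨i, hi⟩ ⟨j, hj⟩ =
      (if (i + j) % 2 = 0 then P ⟨0, by omega⟩ ⟨0, by omega⟩ else P ⟨0, by omega⟩ ⟨1, by omega⟩) := by
  set c0 := P ⟨0, by omega⟩ ⟨0, by omega⟩ with hc0
  set c1 := P ⟨0, by omega⟩ ⟨1, by omega⟩ with hc1
  have par : ∀ a b : ℕ, a % 2 = b % 2 →
      (if a % 2 = 0 then c0 else c1) = (if b % 2 = 0 then c0 else c1) := by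
    intro a b hab; rw [hab]
  have row0 : ∀ j : ℕ, (hj : j < n) → P ⟨0, by omega⟩ ⟨j, hj⟩ =
      (if j % 2 = 0 then c0 else c1) := by
    intro j
    induction j using Nat.strong_induction_on with
    | _ j IH =>
      match j with
      | 0 => intro hj; simp [hc0]
      | 1 => intro hj; simp [hc1]
      | (j+2) =>
        intro hj
        have h1 : j + 1 < n := by omega
        have h2 : (0:ℕ) + 1 < n := by omega
        have e1 := R2 0 (j+1) h2 hj
        have e2 := R1 0 j h2 h1
        have : P ⟨0, by omega⟩ ⟨j+2, hj⟩ = P ⟨0, by omega⟩ ⟨j, by omega⟩ := by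
          rw [← e1, e2]
        rw [this, IH j (by omega) (by omega)]
        exact par _ _ (by omega)
  intro i
  induction i with
  | zero => intro j hi hj; rw [row0 j hj]; norm_num [hc0, hc1]
  | succ i IH =>
    intro j hi hj
    by_cases hj1 : j + 1 < n
    · rw [R2 i j hi hj1, IH (j+1) (by omega) hj1]
      exact par _ _ (by omega)
    · have hj2 : 1 ≤ j := by omega
      obtain ⟨j', rfl⟩ : ∃ j', j = j' + 1 := ⟨j - 1, by omega⟩
      rw [R1 i j' hi (by omega), IH j' (by omega) (by omega)]
      exact par _ _ (by omega)

theorem part1 {n : ℕ} (hn : 2 ≤ n) (P : Matrix (Fin n) (Fin n) ℝ) :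
    (Gmat n * P * (Hmat n)ᵀ = 0 ∧ Hmat n * P * (Gmat n)ᵀ = 0) ↔
      ∃ a b : ℝ, P = a • onesM n + b • checkerM n := by
  constructor
  · rintro ⟨h1, h2⟩
    have R1 : ∀ i j : ℕ, (hi : i + 1 < n) → (hj : j + 1 < n) →
        P ⟨i+1, hi⟩ ⟨j+1, hj⟩ = P ⟨i, by omega⟩ ⟨j, by omega⟩ := by
      intro i j hi hj
      have e1 : (Gmat n * P * (Hmat n)ᵀ) ⟨i, by omega⟩ ⟨j, by omega⟩ = 0 := by rw [h1]; rfl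
      have e2 : (Hmat n * P * (Gmat n)ᵀ) ⟨i, by omega⟩ ⟨j, by omega⟩ = 0 := by rw [h2]; rfl
      rw [GPHt_apply] at e1
      rw [HPGt_apply] at e2
      simp only at e1 e2
      linarith
    have R2 : ∀ i j : ℕ, (hi : i + 1 < n) → (hj : j + 1 < n) →
        P ⟨i+1, hi⟩ ⟨j, by omega⟩ = P ⟨i, by omega⟩ ⟨j+1, hj⟩ := by
      intro i j hi hj
      have e1 : (Gmat n * P * (Hmat n)ᵀ) ⟨i, by omega⟩ ⟨j, by omega⟩ = 0 := by rw [h1]; rfl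
      have e2 : (Hmat n * P * (Gmat n)ᵀ) ⟨i, by omega⟩ ⟨j, by omega⟩ = 0 := by rw [h2]; rfl
      rw [GPHt_apply] at e1
      rw [HPGt_apply] at e2
      simp only at e1 e2
      linarith
    have key := kernel_char hn P R1 R2
    set c0 := P ⟨0, by omega⟩ ⟨0, by omega⟩
    set c1 := P ⟨0, by omega⟩ ⟨1, by omega⟩
    refine ⟨(c0 + c1) / 2, (c0 - c1) / 2, ?_⟩
    ext i j
    have := key i j i.isLt j.isLt
    simp only [Fin.eta] at this
    rw [this]
    simp only [onesM, checkerM, Matrix.add_apply, Matrix.smul_apply, Matrix.of_apply,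
      smul_eq_mul, mul_one]
    rcases Nat.even_or_odd ((i : ℕ) + (j : ℕ)) with he | ho
    · rw [if_pos (Nat.even_iff.mp he), he.neg_one_pow]; ring
    · rw [if_neg (by simpa [Nat.odd_iff] using ho), ho.neg_one_pow]; ring
  · rintro ⟨a, b, rfl⟩
    constructor <;>
    · ext i j
      have hi := i.isLt; have hj := j.isLt
      first
        | rw [GPHt_apply]
        | rw [HPGt_apply]
      simp only [onesM, checkerM, Matrix.add_apply, Matrix.smul_apply, Matrix.of_apply,
        smul_eq_mul, mul_one, Matrix.zero_apply, Fin.val_mk]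
      ring_nf

lemma colG {n : ℕ} (y : Fin (n-1) → ℝ) (hy : (Gmat n)ᵀ *ᵥ y = 0) (k : Fin n) :
    (if hm : 1 ≤ (k:ℕ) ∧ (k:ℕ) - 1 < n - 1 then y ⟨(k:ℕ) - 1, hm.2⟩ else 0)
      - (if hm : (k:ℕ) < n - 1 then y ⟨(k:ℕ), hm⟩ else 0) = 0 := by
  have := congrFun hy k
  simp only [Matrix.mulVec, dotProduct, Matrix.transpose_apply, Gmat, Emat, Zmat,
    Matrix.sub_apply, Matrix.of_apply, sub_mul, ite_mul, one_mul, zero_mul,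
    Finset.sum_sub_distrib, Pi.zero_apply, sum_if_eq', sum_if_eq_succ] at this
  exact this

lemma colH {n : ℕ} (y : Fin (n-1) → ℝ) (hy : (Hmat n)ᵀ *ᵥ y = 0) (k : Fin n) :
    (if hm : 1 ≤ (k:ℕ) ∧ (k:ℕ) - 1 < n - 1 then y ⟨(k:ℕ) - 1, hm.2⟩ else 0)
      + (if hm : (k:ℕ) < n - 1 then y ⟨(k:ℕ), hm⟩ else 0) = 0 := by
  have := congrFun hy k
  simp only [Matrix.mulVec, dotProduct, Matrix.transpose_apply, Hmat, Emat, Zmat,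
    Matrix.add_apply, Matrix.of_apply, add_mul, ite_mul, one_mul, zero_mul,
    Finset.sum_add_distrib, Pi.zero_apply, sum_if_eq', sum_if_eq_succ] at this
  exact this

lemma injG {n : ℕ} (hn : 2 ≤ n) (y : Fin (n-1) → ℝ) (hy : (Gmat n)ᵀ *ᵥ y = 0) : y = 0 := by
  have key : ∀ m (hm : m < n - 1), y ⟨m, hm⟩ = 0 := by
    intro m
    induction m with
    | zero =>
      intro hm
      have := colG y hy ⟨0, by omega⟩
      rw [dif_neg (show ¬(1 ≤ 0 ∧ 0 - 1 < n - 1) by simp), dif_pos (show 0 < n - 1 from hm)] at this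
      linarith
    | succ m IH =>
      intro hm
      have := colG y hy ⟨m + 1, by omega⟩
      rw [dif_pos (show 1 ≤ m + 1 ∧ m + 1 - 1 < n - 1 by omega),
        dif_pos (show m + 1 < n - 1 from hm)] at this
      simp only [Nat.add_sub_cancel] at this
      rw [IH (by omega)] at this
      linarith
  funext i
  have := key i i.isLt
  simpa using this

lemma injH {n : ℕ} (hn : 2 ≤ n) (y : Fin (n-1) → ℝ) (hy : (Hmat n)ᵀ *ᵥ y = 0) : y = 0 := by
  have key : ∀ m (hm : m < n - 1), y ⟨m, hm⟩ = 0 := by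
    intro m
    induction m with
    | zero =>
      intro hm
      have := colH y hy ⟨0, by omega⟩
      rw [dif_neg (show ¬(1 ≤ 0 ∧ 0 - 1 < n - 1) by simp), dif_pos (show 0 < n - 1 from hm)] at this
      linarith
    | succ m IH =>
      intro hm
      have := colH y hy ⟨m + 1, by omega⟩
      rw [dif_pos (show 1 ≤ m + 1 ∧ m + 1 - 1 < n - 1 by omega),
        dif_pos (show m + 1 < n - 1 from hm)] at this
      simp only [Nat.add_sub_cancel] at this
      rw [IH (by omega)] at this
      linarith
  funext i
  have := key i i.isLt
  simpa using this

lemma kron_mulVec {ι₁ ι₂ κ₁ κ₂ : Type*} [Fintype κ₁] [Fintype κ₂]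
    (M : Matrix ι₁ κ₁ ℝ) (N : Matrix ι₂ κ₂ ℝ) (x : κ₁ × κ₂ → ℝ) (p : ι₁ × ι₂) :
    ((M ⊗ₖ N) *ᵥ x) p = (M * (Matrix.of fun k l => x (k, l)) * Nᵀ) p.1 p.2 := by
  simp only [Matrix.mulVec, dotProduct, Matrix.kroneckerMap_apply, Matrix.mul_apply,
    Matrix.transpose_apply, Matrix.of_apply, Fintype.sum_prod_type, Finset.sum_mul]
  rw [Finset.sum_comm]
  exact Finset.sum_congr rfl fun l _ => Finset.sum_congr rfl fun k _ => by ring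

/-- transpose of a Kronecker product -/
lemma kron_transpose {ι₁ ι₂ κ₁ κ₂ : Type*}
    (M : Matrix ι₁ κ₁ ℝ) (N : Matrix ι₂ κ₂ ℝ) : (M ⊗ₖ N)ᵀ = Mᵀ ⊗ₖ Nᵀ := by
  ext p q
  rfl

theorem stmt17 (n : ℕ) (hn : 2 ≤ n) (h : ℝ) (hh : h = 1 / n)
    (Bx By : Matrix (Fin (n - 1) × Fin (n - 1)) (Fin n × Fin n) ℝ)
    (hBx : Bx = (1 / (4 * h)) • (Gmat n ⊗ₖ Hmat n))
    (hBy : By = (1 / (4 * h)) • (Hmat n ⊗ₖ Gmat n))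
    (B : Matrix ((Fin 2) × (Fin (n - 1) × Fin (n - 1))) (Fin n × Fin n) ℝ)
    (hB : B = Matrix.of fun p q => if p.1 = 0 then Bx p.2 q else By p.2 q)
    (Δ : Matrix (Fin (n - 1) × Fin (n - 1)) (Fin (n - 1) × Fin (n - 1)) ℝ)
    (hΔ : Δ = Bx * Bxᵀ + By * Byᵀ)
    (A : Matrix ((Fin 2) × (Fin (n - 1) × Fin (n - 1)))
          ((Fin 2) × (Fin (n - 1) × Fin (n - 1))) ℝ)
    (hA : A = (1 : Matrix (Fin 2) (Fin 2) ℝ) ⊗ₖ Δ) :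
    (∀ P : Matrix (Fin n) (Fin n) ℝ,
      (Gmat n * P * (Hmat n)ᵀ = 0 ∧ Hmat n * P * (Gmat n)ᵀ = 0) ↔
        ∃ a b : ℝ, P = a • onesM n + b • checkerM n) ∧
    LinearIndependent ℝ ![onesM n, checkerM n] ∧
    Module.finrank ℝ (LinearMap.ker (Bᵀ * A⁻¹ * B).mulVecLin) = 2 := by
  have hc : (1 / (4 * h)) ≠ 0 := by
    rw [hh]
    have : (0:ℝ) < n := by positivity
    positivity
  -- base vectors
  set w1 : (Fin n × Fin n) → ℝ := fun _ => 1 with hw1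
  set w2 : (Fin n × Fin n) → ℝ := fun p => (-1 : ℝ) ^ ((p.1 : ℕ) + (p.2 : ℕ)) with hw2
  have h1n : (1 : ℕ) < n := by omega
  have h0n : (0 : ℕ) < n := by omega
  refine ⟨part1 hn, ?_, ?_⟩
  · -- linear independence of the matrices
    rw [linearIndependent_fin2]
    constructor
    · simp only [Matrix.cons_val_one, Matrix.head_cons]
      intro hzero
      have := congrFun (congrFun hzero ⟨0, h0n⟩) ⟨0, h0n⟩
      simp [checkerM] at this
    · intro a hzero
      simp only [Matrix.cons_val_one, Matrix.head_cons, Matrix.cons_val_zero] at hzero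
      have e00 := congrFun (congrFun hzero ⟨0, h0n⟩) ⟨0, h0n⟩
      have e01 := congrFun (congrFun hzero ⟨0, h0n⟩) ⟨1, h1n⟩
      simp [checkerM, onesM, Matrix.smul_apply] at e00 e01
      rw [e00] at e01
      norm_num at e01
  · -- the rank computation
    -- Step 1 : Bxᵀ has trivial kernel
    have kerBxT : ∀ x : (Fin (n-1) × Fin (n-1)) → ℝ, Bxᵀ *ᵥ x = 0 → x = 0 := by
      intro x hx
      rw [hBx, Matrix.transpose_smul, Matrix.smul_mulVec, smul_eq_zero] at hx
      rcases hx with hx | hx; · exact absurd hx hc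
      rw [kron_transpose] at hx
      set X : Matrix (Fin (n-1)) (Fin (n-1)) ℝ := Matrix.of fun k l => x (k, l) with hX
      have hmat : (Gmat n)ᵀ * X * ((Hmat n)ᵀ)ᵀ = 0 := by
        ext p q
        have := congrFun hx (p, q)
        rw [kron_mulVec] at this
        exact this
      rw [Matrix.transpose_transpose] at hmat
      -- columns of (X * Hmat n) lie in ker of (Gmat n)ᵀ
      have hXH : X * Hmat n = 0 := by
        ext i j
        have hcol : (Gmat n)ᵀ *ᵥ (fun k => (X * Hmat n) k j) = 0 := by
          funext p
          have h2 : ((Gmat n)ᵀ * (X * Hmat n)) p j = 0 := by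
            rw [← Matrix.mul_assoc, hmat]; rfl
          simpa [Matrix.mulVec, dotProduct, Matrix.mul_apply] using h2
        have := congrFun (injG hn _ hcol) i
        simpa using this
      -- rows of X lie in ker of (Hmat n)ᵀ
      have hX0 : X = 0 := by
        ext i j
        have hrow : (Hmat n)ᵀ *ᵥ (fun l => X i l) = 0 := by
          funext q
          have := congrFun (congrFun hXH i) q
          simpa [Matrix.mulVec, dotProduct, Matrix.transpose_apply, Matrix.mul_apply,
            mul_comm] using this
        have := congrFun (injH hn _ hrow) j
        simpa using this
      funext p
      have := congrFun (congrFun hX0 p.1) p.2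
      simpa [hX] using this
    -- Step 2 : Δ is positive definite
    have psdx : (Bx * Bxᵀ).PosSemidef := by
      rw [← Matrix.conjTranspose_eq_transpose_of_trivial]
      exact Matrix.posSemidef_self_mul_conjTranspose _
    have psdy : (By * Byᵀ).PosSemidef := by
      rw [← Matrix.conjTranspose_eq_transpose_of_trivial]
      exact Matrix.posSemidef_self_mul_conjTranspose _
    have hΔpd : Δ.PosDef := by
      rw [Matrix.posDef_iff_dotProduct_mulVec]
      constructor
      · rw [hΔ]; exact (psdx.isHermitian).add (psdy.isHermitian)
      · intro x hx
        rw [hΔ, Matrix.add_mulVec, dotProduct_add]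
        have hy2 : (0:ℝ) ≤ star x ⬝ᵥ (By * Byᵀ) *ᵥ x := psdy.dotProduct_mulVec_nonneg x
        have hx2 : (0:ℝ) < star x ⬝ᵥ (Bx * Bxᵀ) *ᵥ x := by
          have hkey : star x ⬝ᵥ (Bx * Bxᵀ) *ᵥ x = star (Bxᵀ *ᵥ x) ⬝ᵥ (Bxᵀ *ᵥ x) := by
            rw [← Matrix.mulVec_mulVec, Matrix.dotProduct_mulVec, star_trivial,
              star_trivial, ← Matrix.mulVec_transpose]
          rw [hkey]
          exact Matrix.dotProduct_star_self_pos_iff.mpr fun hzero => hx (kerBxT x hzero)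
        calc (0:ℝ) < star x ⬝ᵥ (Bx * Bxᵀ) *ᵥ x + star x ⬝ᵥ (By * Byᵀ) *ᵥ x := by linarith
          _ = _ := rfl
    -- Step 3 : A is positive definite
    have hApd : A.PosDef := by
      rw [Matrix.posDef_iff_dotProduct_mulVec]
      constructor
      · rw [hA]
        ext p q
        simp only [Matrix.conjTranspose_apply, Matrix.kroneckerMap_apply, star_trivial,
          Matrix.one_apply]
        rw [show ((Δ q.2 p.2) : ℝ) = Δ p.2 q.2 from by
          have := hΔpd.isHermitian.apply q.2 p.2
          simpa using this.symm]
        by_cases hpq : q.1 = p.1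
        · rw [if_pos hpq, if_pos hpq.symm]
        · rw [if_neg hpq, if_neg (Ne.symm hpq)]
      · intro x hx
        have expand : (A *ᵥ x) = fun tp => (Δ *ᵥ fun q => x (tp.1, q)) tp.2 := by
          funext tp
          rw [hA, kron_mulVec]
          simp [Matrix.mul_apply, Matrix.mulVec, dotProduct, mul_comm]
        have hsum : star x ⬝ᵥ A *ᵥ x =
            ∑ t : Fin 2, (star fun q => x (t, q)) ⬝ᵥ Δ *ᵥ (fun q => x (t, q)) := by
          rw [star_trivial, expand]
          simp only [dotProduct, star_trivial]
          rw [Fintype.sum_prod_type]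
        rw [hsum]
        obtain ⟨⟨t0, p0⟩, hp0⟩ : ∃ p, x p ≠ 0 := by
          by_contra hall
          push_neg at hall
          exact hx (funext fun p => hall p)
        refine Finset.sum_pos' (fun t _ => hΔpd.posSemidef.dotProduct_mulVec_nonneg _) ⟨t0, Finset.mem_univ t0, ?_⟩
        exact hΔpd.dotProduct_mulVec_pos fun hzero => hp0 (congrFun hzero p0)
    -- Step 4 : kernel of Bᵀ A⁻¹ B equals kernel of B
    have hAinv : A⁻¹.PosDef := hApd.inv
    have hker : LinearMap.ker (Bᵀ * A⁻¹ * B).mulVecLin = LinearMap.ker B.mulVecLin := by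
      ext x
      simp only [LinearMap.mem_ker, Matrix.mulVecLin_apply]
      constructor
      · intro hx
        have h0 : x ⬝ᵥ ((Bᵀ * A⁻¹ * B) *ᵥ x) = 0 := by rw [hx, dotProduct_zero]
        rw [← Matrix.mulVec_mulVec, ← Matrix.mulVec_mulVec, Matrix.dotProduct_mulVec,
          Matrix.vecMul_transpose] at h0
        by_contra hBx0
        have := hAinv.dotProduct_mulVec_pos hBx0
        rw [star_trivial] at this
        linarith
      · intro hx
        rw [← Matrix.mulVec_mulVec, hx, Matrix.mulVec_zero]
    -- Step 5 : kernel of B is the span of w1 and w2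
    have hBmv : ∀ x : (Fin n × Fin n) → ℝ, ∀ t p, (B *ᵥ x) (t, p)
        = if t = 0 then (Bx *ᵥ x) p else (By *ᵥ x) p := by
      intro x t p
      rw [hB]
      simp only [Matrix.mulVec, dotProduct, Matrix.of_apply]
      split <;> rfl
    have hBx_iff : ∀ x : (Fin n × Fin n) → ℝ,
        (Bx *ᵥ x = 0 ↔ Gmat n * (Matrix.of fun i j => x (i, j)) * (Hmat n)ᵀ = 0) := by
      intro x
      rw [hBx, Matrix.smul_mulVec, smul_eq_zero, or_iff_right hc]
      constructor
      · intro hx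
        ext i j
        have := congrFun hx (i, j)
        rw [kron_mulVec] at this
        exact this
      · intro hx
        funext p
        rw [kron_mulVec]
        exact congrFun (congrFun hx p.1) p.2
    have hBy_iff : ∀ x : (Fin n × Fin n) → ℝ,
        (By *ᵥ x = 0 ↔ Hmat n * (Matrix.of fun i j => x (i, j)) * (Gmat n)ᵀ = 0) := by
      intro x
      rw [hBy, Matrix.smul_mulVec, smul_eq_zero, or_iff_right hc]
      constructor
      · intro hx
        ext i j
        have := congrFun hx (i, j)
        rw [kron_mulVec] at this
        exact this
      · intro hx
        funext p
        rw [kron_mulVec]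
        exact congrFun (congrFun hx p.1) p.2
    have hkerB : LinearMap.ker B.mulVecLin = Submodule.span ℝ {w1, w2} := by
      ext x
      simp only [LinearMap.mem_ker, Matrix.mulVecLin_apply, Submodule.mem_span_pair]
      constructor
      · intro hx
        have hBx0 : Bx *ᵥ x = 0 := by
          funext p
          have := congrFun hx ((0 : Fin 2), p)
          rw [hBmv x 0 p, if_pos rfl] at this
          exact this
        have hBy0 : By *ᵥ x = 0 := by
          funext p
          have := congrFun hx ((1 : Fin 2), p)
          rw [hBmv x 1 p, if_neg (by decide)] at this
          exact this
        obtain ⟨a, b, hab⟩ := (part1 hn (Matrix.of fun i j => x (i, j))).mp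
          ⟨(hBx_iff x).mp hBx0, (hBy_iff x).mp hBy0⟩
        refine ⟨a, b, ?_⟩
        funext p
        have := congrFun (congrFun hab p.1) p.2
        simp only [Matrix.add_apply, Matrix.smul_apply, Matrix.of_apply, onesM, checkerM,
          smul_eq_mul, mul_one] at this
        simp only [Pi.add_apply, Pi.smul_apply, hw1, hw2, smul_eq_mul, mul_one]
        exact this.symm ▸ rfl
      · rintro ⟨a, b, hab⟩
        have hP : (Matrix.of fun i j => x (i, j)) = a • onesM n + b • checkerM n := by
          ext i j
          have := congrFun hab.symm (i, j)
          simp only [Pi.add_apply, Pi.smul_apply, hw1, hw2, smul_eq_mul, mul_one] at this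
          simp only [Matrix.add_apply, Matrix.smul_apply, Matrix.of_apply, onesM, checkerM,
            smul_eq_mul, mul_one]
          exact this
        obtain ⟨hG, hH⟩ := (part1 hn (Matrix.of fun i j => x (i, j))).mpr ⟨a, b, hP⟩
        funext tp
        obtain ⟨t, p⟩ := tp
        rw [hBmv x t p]
        split
        · exact congrFun ((hBx_iff x).mpr hG) p
        · exact congrFun ((hBy_iff x).mpr hH) p
    -- Step 6 : conclude
    have hli : LinearIndependent ℝ ![w1, w2] := by
      rw [linearIndependent_fin2]
      constructor
      · simp only [Matrix.cons_val_one, Matrix.head_cons]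
        intro hzero
        have := congrFun hzero (⟨0, h0n⟩, ⟨0, h0n⟩)
        simp [hw2] at this
      · intro a hzero
        simp only [Matrix.cons_val_one, Matrix.head_cons, Matrix.cons_val_zero] at hzero
        have e00 := congrFun hzero (⟨0, h0n⟩, ⟨0, h0n⟩)
        have e01 := congrFun hzero (⟨0, h0n⟩, ⟨1, h1n⟩)
        simp [hw1, hw2] at e00 e01
        rw [e00] at e01
        norm_num at e01
    rw [hker, hkerB, show ({w1, w2} : Set ((Fin n × Fin n) → ℝ)) = Set.range ![w1, w2] from
      (Matrix.range_cons_cons_empty w1 w2 _).symm]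
    rw [finrank_span_eq_card hli, Fintype.card_fin]
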